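/- Let M ≥ 2 be an even squarefree integer such that −1 is a global norm from K = ℚ(√M), and write the fundamental unit as ε_K = a + b√M with a, b positive integers. Then N(ε_K) = −1 if and only if b is odd. -/

import Mathlib

open NumberField

/-- The real quadratic field `K = ℚ(√M)`, realized inside `ℝ`. -/
noncomputable def Ksqrt (M : ℕ) : IntermediateField ℚ ℝ :=
  IntermediateField.adjoin ℚ {Real.sqrt M}

/-- `ε` is the fundamental unit of `ℚ(√M)`: `ε > 1` and `ε` is minimal among units `> 1`. -/
def IsFundamentalUnit (M : ℕ) (ε : (𝓞 (Ksqrt M))ˣ) : Prop :=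
  1 < (((ε : 𝓞 (Ksqrt M)) : Ksqrt M) : ℝ) ∧
    ∀ u : (𝓞 (Ksqrt M))ˣ, 1 < (((u : 𝓞 (Ksqrt M)) : Ksqrt M) : ℝ) →
      (((ε : 𝓞 (Ksqrt M)) : Ksqrt M) : ℝ) ≤ (((u : 𝓞 (Ksqrt M)) : Ksqrt M) : ℝ)

open Polynomial in
/-- The minimal polynomial of an irrational real number satisfying a rational quadratic
relation `x ^ 2 = u + v * x`. -/
lemma minpoly_of_quadratic (u v : ℚ) (x : ℝ) (hx : Irrational x)
    (hsq : x ^ 2 = (u : ℝ) + (v : ℝ) * x) :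
    minpoly ℚ x = X ^ 2 - C v * X - C u := by
  set p : ℚ[X] := X ^ 2 - C v * X - C u with hp
  have hpm : p.Monic := by
    unfold p
    monicity!
  have hpd : p.natDegree = 2 := by
    unfold p
    compute_degree!
  have hroot : (Polynomial.aeval x) p = 0 := by
    simp only [p, map_sub, map_mul, map_pow, aeval_X, aeval_C, eq_ratCast, Rat.cast_eq_id, id]
    linear_combination hsq
  have hint : IsIntegral ℚ x := ⟨p, hpm, by rwa [Polynomial.aeval_def] at hroot⟩
  have hdvd : minpoly ℚ x ∣ p := minpoly.dvd ℚ x hroot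
  have h2 : 2 ≤ (minpoly ℚ x).natDegree := by
    rw [minpoly.two_le_natDegree_iff hint]
    rintro ⟨q, hq⟩
    exact hx ⟨q, hq⟩
  exact (Polynomial.eq_of_monic_of_dvd_of_natDegree_le (minpoly.monic hint) hpm hdvd
    (hpd ▸ h2)).symm

/-- Key integer arithmetic mod 8. -/
lemma key_arith (A B Mz n : ℤ) (hn : n = A ^ 2 - Mz * B ^ 2)
    (h1 : n = 1 ∨ n = -1) (hM4 : Mz % 4 = 2) : n = -1 ↔ B % 2 = 1 := by
  obtain ⟨v, hv⟩ : ∃ v, Mz = 4 * v + 2 := ⟨Mz / 4, by omega⟩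
  rcases Int.even_or_odd A with ⟨k, hk⟩ | ⟨k, hk⟩
  · exfalso
    obtain ⟨w, hw⟩ : ∃ w, A ^ 2 = 4 * w := ⟨k * k, by rw [hk]; ring⟩
    obtain ⟨u, hu⟩ : ∃ u, Mz * B ^ 2 = 2 * u := ⟨(2 * v + 1) * B ^ 2, by rw [hv]; ring⟩
    rw [hw, hu] at hn
    omega
  · obtain ⟨m, hm⟩ := Int.even_mul_succ_self k
    have e1 : A ^ 2 = 8 * m + 1 := by linear_combination (A + 2 * k + 1) * hk + 4 * hm
    rcases Int.even_or_odd B with ⟨l, hl⟩ | ⟨l, hl⟩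
    · obtain ⟨u, hu⟩ : ∃ u, Mz * B ^ 2 = 8 * u := ⟨(2 * v + 1) * (l * l), by rw [hv, hl]; ring⟩
      rw [e1, hu] at hn
      omega
    · obtain ⟨m', hm'⟩ := Int.even_mul_succ_self l
      have e2 : B ^ 2 = 8 * m' + 1 := by linear_combination (B + 2 * l + 1) * hl + 4 * hm'
      obtain ⟨u, hu⟩ : ∃ u, Mz * B ^ 2 = 32 * u + 4 * v + 16 * m' + 2 :=
        ⟨v * m', by rw [hv, e2]; ring⟩
      rw [e1, hu] at hn
      omega

open Polynomial IntermediateField in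
/-- For `M ≥ 2` even squarefree with `-1` a global norm from `K = ℚ(√M)`, writing the
fundamental unit as `ε_K = a + b√M` with `a, b` positive integers, one has
`N(ε_K) = -1` iff `b` is odd. -/
theorem stmt_18 (M : ℕ) (hM : 2 ≤ M) (hMeven : Even M) (hsf : Squarefree M)
    [NumberField (Ksqrt M)]
    (hglob : ∃ x : Ksqrt M, Algebra.norm ℚ x = -1)
    (ε : (𝓞 (Ksqrt M))ˣ) (hε : IsFundamentalUnit M ε)
    (a b : ℕ) (ha : 0 < a) (hb : 0 < b)
    (hab : (((ε : 𝓞 (Ksqrt M)) : Ksqrt M) : ℝ) = a + b * Real.sqrt M) :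
    Algebra.norm ℚ ((ε : 𝓞 (Ksqrt M)) : Ksqrt M) = -1 ↔ Odd b := by
  have hM0 : (0 : ℝ) ≤ (M : ℝ) := by positivity
  have hθsq : Real.sqrt M ^ 2 = (M : ℝ) := Real.sq_sqrt hM0
  have hMns : ¬ IsSquare M := by
    rintro ⟨r, hr⟩
    have hu : IsUnit r := hsf r (hr ▸ dvd_rfl)
    rw [Nat.isUnit_iff] at hu
    rw [hu] at hr
    omega
  have hirr : Irrational (Real.sqrt M) := irrational_sqrt_natCast_iff.mpr hMns
  set x : Ksqrt M := ((ε : 𝓞 (Ksqrt M)) : Ksqrt M) with hxdef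
  have hxval : (algebraMap (Ksqrt M) ℝ) x = (a : ℝ) + (b : ℝ) * Real.sqrt M := hab
  have hxirr : Irrational ((algebraMap (Ksqrt M) ℝ) x) := by
    rw [hxval]
    exact (hirr.natCast_mul (hb).ne').natCast_add a
  have hinj : Function.Injective (algebraMap (Ksqrt M) ℝ) := (algebraMap (Ksqrt M) ℝ).injective
  have hintx : IsIntegral ℚ x := IsIntegral.of_finite ℚ x
  -- the minimal polynomial of x
  have hminx : minpoly ℚ x = X ^ 2 - C (2 * (a : ℚ)) * X - C ((M : ℚ) * b ^ 2 - a ^ 2) := by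
    rw [← minpoly.algebraMap_eq hinj x]
    apply minpoly_of_quadratic _ _ _ hxirr
    rw [hxval]
    push_cast
    linear_combination (b : ℝ) ^ 2 * hθsq
  have hdeg2 : (minpoly ℚ x).natDegree = 2 := by
    rw [hminx]
    compute_degree!
  -- the minimal polynomial of √M and the degree of K
  have hintθ : IsIntegral ℚ (Real.sqrt M) :=
    ⟨X ^ 2 - C (M : ℚ), by monicity!, by
      simp only [Polynomial.eval₂_sub, Polynomial.eval₂_pow, Polynomial.eval₂_X,
        Polynomial.eval₂_C]
      rw [show (algebraMap ℚ ℝ) (M : ℚ) = (M : ℝ) by push_cast; rfl]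
      rw [hθsq]; ring⟩
  have hminθ : minpoly ℚ (Real.sqrt M) = X ^ 2 - C (0 : ℚ) * X - C (M : ℚ) := by
    apply minpoly_of_quadratic _ _ _ hirr
    push_cast
    rw [hθsq]; ring
  have hrank : Module.finrank ℚ (Ksqrt M) = 2 := by
    have h := IntermediateField.adjoin.finrank hintθ
    rw [hminθ] at h
    have : (X ^ 2 - C (0 : ℚ) * X - C (M : ℚ)).natDegree = 2 := by compute_degree!
    rw [this] at h
    exact h
  -- ℚ⟮x⟯ = ⊤
  have hfx := IntermediateField.adjoin.finrank hintx
  rw [hdeg2] at hfx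
  have htop : ℚ⟮x⟯ = ⊤ := by
    have h1 : Subalgebra.toSubmodule
        ℚ⟮x⟯.toSubalgebra = ⊤ := by
      apply Submodule.eq_top_of_finrank_eq
      rw [Subalgebra.finrank_toSubmodule, IntermediateField.finrank_eq_finrank_subalgebra,
        hrank, hfx]
    have h2 := Algebra.toSubmodule_eq_top.mp h1
    apply IntermediateField.toSubalgebra_injective
    rw [h2, IntermediateField.top_toSubalgebra]
  -- power basis with generator x
  let pb : PowerBasis ℚ (Ksqrt M) :=
    (IntermediateField.adjoin.powerBasis hintx).map
      ((IntermediateField.equivOfEq htop).trans IntermediateField.topEquiv)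
  have hgen : pb.gen = x := rfl
  have hdim : pb.dim = 2 := by
    show (IntermediateField.adjoin.powerBasis hintx).dim = 2
    rw [IntermediateField.adjoin.powerBasis_dim, hdeg2]
  -- compute the norm
  have hnorm : Algebra.norm ℚ x = (a : ℚ) ^ 2 - (M : ℚ) * b ^ 2 := by
    have h := Algebra.PowerBasis.norm_gen_eq_coeff_zero_minpoly pb
    rw [hgen, hdim, hminx] at h
    rw [h]
    simp only [coeff_sub, coeff_C_mul, coeff_X_pow, coeff_X_zero, coeff_C]
    norm_num
  -- the norm is ±1
  have hsep : Algebra.IsSeparable ℚ (Ksqrt M) := inferInstance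
  have hunit := NumberField.isUnit_iff_norm.mp ε.isUnit
  rw [RingOfIntegers.coe_norm] at hunit
  rw [← hxdef] at hunit
  rw [hnorm] at hunit
  have hpm : (a : ℚ) ^ 2 - (M : ℚ) * b ^ 2 = 1 ∨ (a : ℚ) ^ 2 - (M : ℚ) * b ^ 2 = -1 := by
    rcases abs_eq (by norm_num : (0:ℚ) ≤ 1) |>.mp hunit with h | h
    · exact Or.inl h
    · exact Or.inr h
  have hZ : ((a : ℤ) ^ 2 - (M : ℤ) * b ^ 2 = 1) ∨ ((a : ℤ) ^ 2 - (M : ℤ) * b ^ 2 = -1) := by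
    rcases hpm with h | h
    · left; exact_mod_cast h
    · right; exact_mod_cast h
  have hM4 : (M : ℤ) % 4 = 2 := by
    obtain ⟨k, hk⟩ := hMeven
    have h4 : ¬ (4 ∣ M) := by
      intro h
      have := hsf 2 (by omega)
      norm_num at this
    omega
  have hkey := key_arith (a : ℤ) (b : ℤ) (M : ℤ) ((a : ℤ) ^ 2 - (M : ℤ) * b ^ 2) rfl hZ hM4
  rw [hnorm]
  constructor
  · intro h
    have h' : (a : ℤ) ^ 2 - (M : ℤ) * b ^ 2 = -1 := by exact_mod_cast h
    have := hkey.mp h'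
    rw [Nat.odd_iff]
    omega
  · intro h
    rw [Nat.odd_iff] at h
    have h' : (a : ℤ) ^ 2 - (M : ℤ) * b ^ 2 = -1 := hkey.mpr (by omega)
    exact_mod_cast h'
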